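/- arXiv:1104.2206 — 2 statements merged into one kernel-verified Lean document; each statement's English description precedes it below -/
import Mathlib

section
/- For all p, q ∈ (0,1], r ∈ ℝ, and ε ∈ (0,1/4), the double integral ∫₀^p ∫₀^p (q² + |α - β + r|²)^(ε-1) dα dβ is at most 6p / q^(1-ε). -/
open MeasureTheory Set intervalIntegral

/-- For all `p, q ∈ (0,1]`, `r ∈ ℝ` and `ε ∈ (0,1/4)`, the double integral
`∫₀^p ∫₀^p (q² + |α - β + r|²)^(ε-1) dα dβ` is at most `6p / q^(1-ε)`. -/
theorem stmt0 (p q r ε : ℝ) (hp : p ∈ Set.Ioc (0:ℝ) 1) (hq : q ∈ Set.Ioc (0:ℝ) 1)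
    (hε : ε ∈ Set.Ioo (0:ℝ) (1/4)) :
    (∫ α in (0:ℝ)..p, ∫ β in (0:ℝ)..p, (q ^ 2 + |α - β + r| ^ 2) ^ (ε - 1)) ≤
      6 * p / q ^ (1 - ε) := by
  obtain ⟨hp0, hp1⟩ := hp
  obtain ⟨hq0, hq1⟩ := hq
  obtain ⟨hε0, hε1⟩ := hε
  set g : ℝ → ℝ := fun x => (q ^ 2 + x ^ 2) ^ (ε - 1) with hgdef
  have hbase : ∀ x : ℝ, 0 < q ^ 2 + x ^ 2 := fun x => by positivity
  have hgpos : ∀ x, 0 < g x := fun x => Real.rpow_pos_of_pos (hbase x) _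
  have hgcont : Continuous g :=
    (continuous_const.add (continuous_pow 2)).rpow_const fun x => Or.inl (hbase x).ne'
  have hs2 : 2 * (ε - 1) < -1 := by linarith
  have hqq : -q ≤ q := by linarith
  have hq2 : ∀ x : ℝ, 0 < x → x ^ (2 * (ε - 1)) = ((x : ℝ) ^ 2) ^ (ε - 1) := by
    intro x hx
    rw [← Real.rpow_natCast x 2, ← Real.rpow_mul hx.le]
    norm_num [mul_comm]
  have hgle_pow : ∀ x : ℝ, q < x → g x ≤ x ^ (2 * (ε - 1)) := by
    intro x hx
    have hx0 : 0 < x := lt_trans hq0 hx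
    rw [hq2 x hx0]
    exact Real.rpow_le_rpow_of_nonpos (by positivity) (by nlinarith) (by linarith)
  have hgle_const : ∀ x : ℝ, g x ≤ q ^ (2 * (ε - 1)) := by
    intro x
    rw [hq2 q hq0]
    exact Real.rpow_le_rpow_of_nonpos (by positivity) (by nlinarith) (by linarith)
  -- Integrability pieces
  have hIoi_pow : IntegrableOn (fun x : ℝ => x ^ (2 * (ε - 1))) (Ioi q) :=
    integrableOn_Ioi_rpow_of_lt hs2 hq0
  have hIoi : IntegrableOn g (Ioi q) := by
    refine hIoi_pow.integrable.mono' (hgcont.aestronglyMeasurable.restrict) ?_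
    refine (ae_restrict_iff' measurableSet_Ioi).2 (ae_of_all _ fun x hx => ?_)
    rw [Real.norm_of_nonneg (hgpos x).le]
    exact hgle_pow x hx
  have hIcc : IntegrableOn g (Icc (-q) q) := hgcont.continuousOn.integrableOn_Icc
  have hIoc : IntegrableOn g (Ioc (-q) q) := hIcc.mono_set Ioc_subset_Icc_self
  have hIic : IntegrableOn g (Iic (-q)) := by
    have h1 : IntegrableOn (fun x => g (-x)) (Ici q) := by
      rw [integrableOn_Ici_iff_integrableOn_Ioi]
      exact hIoi.congr_fun (fun x _ => by simp [hgdef, neg_sq]) measurableSet_Ioi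
    have h2 : volume.restrict (Iic (-q)) = (volume.restrict (Ici q)).map (fun x : ℝ => -x) := by
      rw [← Measure.map_neg_eq_self (volume : Measure ℝ), measurableEmbedding_neg.restrict_map]
      congr 1
      ext x
      simp
    rw [IntegrableOn, h2, measurableEmbedding_neg.integrable_map_iff]
    exact h1
  have hIci : IntegrableOn g (Ici (-q)) := by
    rw [← Icc_union_Ioi_eq_Ici hqq]
    exact hIcc.union hIoi
  have hg_int : Integrable g := by
    rw [← integrableOn_univ, ← Iic_union_Ici (a := -q)]
    exact hIic.union hIci
  -- Integral bounds
  have hpos_rpow : (0:ℝ) < q ^ (2 * ε - 1) := Real.rpow_pos_of_pos hq0 _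
  have hIoi_le : ∫ x in Ioi q, g x ≤ 2 * q ^ (2 * ε - 1) := by
    have h1 : ∫ x in Ioi q, g x ≤ ∫ x in Ioi q, x ^ (2 * (ε - 1)) :=
      setIntegral_mono_on hIoi hIoi_pow measurableSet_Ioi fun x hx => hgle_pow x hx
    have h2 : ∫ x in Ioi q, x ^ (2 * (ε - 1)) = -q ^ (2 * (ε - 1) + 1) / (2 * (ε - 1) + 1) :=
      integral_Ioi_rpow_of_lt hs2 hq0
    have h3 : (2 * (ε - 1) + 1) = 2 * ε - 1 := by ring
    rw [h2, h3] at h1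
    have h4 : -q ^ (2 * ε - 1) / (2 * ε - 1) ≤ 2 * q ^ (2 * ε - 1) := by
      rw [div_le_iff_of_neg (by linarith)]
      nlinarith
    linarith
  have hIic_le : ∫ x in Iic (-q), g x ≤ 2 * q ^ (2 * ε - 1) := by
    have h0 : ∫ x in Iic (-q), g x = ∫ x in Iic (-q), g (-x) := by
      refine setIntegral_congr_fun measurableSet_Iic fun x _ => ?_
      simp [hgdef, neg_sq]
    rw [h0, integral_comp_neg_Iic (-q) g, neg_neg]
    exact hIoi_le
  have hIoc_le : ∫ x in Ioc (-q) q, g x ≤ 2 * q ^ (2 * ε - 1) := by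
    have h1 : ∫ x in Ioc (-q) q, g x ≤ ∫ _ in Ioc (-q) q, q ^ (2 * (ε - 1)) :=
      setIntegral_mono_on hIoc (integrableOn_const measure_Ioc_lt_top.ne)
        measurableSet_Ioc fun x _ => hgle_const x
    have h2 : ∫ _ in Ioc (-q) q, q ^ (2 * (ε - 1)) = (2 * q) * q ^ (2 * (ε - 1)) := by
      rw [setIntegral_const, measureReal_def, Real.volume_Ioc, smul_eq_mul,
        ENNReal.toReal_ofReal (by linarith)]
      ring_nf
    have h3 : (2 * q) * q ^ (2 * (ε - 1)) = 2 * q ^ (2 * ε - 1) := by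
      have h5 : q * q ^ (2 * (ε - 1)) = q ^ (2 * ε - 1) := by
        nth_rewrite 1 [← Real.rpow_one q]
        rw [← Real.rpow_add hq0]
        congr 1
        ring
      nlinarith [h5]
    rw [h2, h3] at h1
    exact h1
  have hIoi' : IntegrableOn g (Ioi (-q)) := by
    rw [← Ioc_union_Ioi_eq_Ioi hqq]
    exact hIoc.union hIoi
  have htotal : ∫ x, g x ≤ 6 * q ^ (2 * ε - 1) := by
    have hsplit1 : ∫ x, g x = (∫ x in Iic (-q), g x) + ∫ x in Ioi (-q), g x :=
      (integral_Iic_add_Ioi hIic hIoi').symm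
    have hsplit2 : ∫ x in Ioi (-q), g x
        = (∫ x in Ioc (-q) q, g x) + ∫ x in Ioi q, g x := by
      rw [← setIntegral_union Ioc_disjoint_Ioi_same measurableSet_Ioi hIoc hIoi,
        Ioc_union_Ioi_eq_Ioi hqq]
    rw [hsplit1, hsplit2]
    linarith
  -- Inner integral rewriting
  have hrw : ∀ α : ℝ, (∫ β in (0:ℝ)..p, (q ^ 2 + |α - β + r| ^ 2) ^ (ε - 1))
      = ∫ x in (α + r - p)..(α + r), g x := by
    intro α
    have h1 : ∀ β : ℝ, (q ^ 2 + |α - β + r| ^ 2) ^ (ε - 1) = g ((α + r) - β) := by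
      intro β
      have : |α - β + r| ^ 2 = ((α + r) - β) ^ 2 := by rw [sq_abs]; ring
      rw [hgdef]; dsimp only; rw [this]
    simp only [h1]
    have := intervalIntegral.integral_comp_sub_left (a := (0:ℝ)) (b := p) g (α + r)
    rw [this, sub_zero]
  have hinner_le : ∀ α : ℝ, (∫ β in (0:ℝ)..p, (q ^ 2 + |α - β + r| ^ 2) ^ (ε - 1))
      ≤ 6 * q ^ (2 * ε - 1) := by
    intro α
    rw [hrw α, intervalIntegral.integral_of_le (by linarith)]
    refine le_trans ?_ htotal
    exact setIntegral_le_integral hg_int (ae_of_all _ fun x => (hgpos x).le)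
  -- Continuity of the inner integral, for integrability of the outer integrand
  have hF : Continuous fun x => ∫ t in (0:ℝ)..x, g t :=
    intervalIntegral.continuous_primitive (fun a b => hg_int.intervalIntegrable) 0
  have hcont : Continuous fun α => ∫ β in (0:ℝ)..p, (q ^ 2 + |α - β + r| ^ 2) ^ (ε - 1) := by
    have heq : ∀ α : ℝ, (∫ β in (0:ℝ)..p, (q ^ 2 + |α - β + r| ^ 2) ^ (ε - 1))
        = (∫ t in (0:ℝ)..(α + r), g t) - ∫ t in (0:ℝ)..(α + r - p), g t := by
      intro α
      rw [hrw α, eq_sub_iff_add_eq, add_comm]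
      exact intervalIntegral.integral_add_adjacent_intervals
        hg_int.intervalIntegrable hg_int.intervalIntegrable
    simp only [heq]
    exact (hF.comp (continuous_id.add continuous_const)).sub
      (hF.comp ((continuous_id.add continuous_const).sub continuous_const))
  -- Put it together
  have houter : (∫ α in (0:ℝ)..p, ∫ β in (0:ℝ)..p, (q ^ 2 + |α - β + r| ^ 2) ^ (ε - 1))
      ≤ p * (6 * q ^ (2 * ε - 1)) := by
    calc (∫ α in (0:ℝ)..p, ∫ β in (0:ℝ)..p, (q ^ 2 + |α - β + r| ^ 2) ^ (ε - 1))
        ≤ ∫ _ in (0:ℝ)..p, 6 * q ^ (2 * ε - 1) := by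
          refine intervalIntegral.integral_mono_on hp0.le
            (hcont.intervalIntegrable 0 p) intervalIntegrable_const fun α _ => hinner_le α
      _ = p * (6 * q ^ (2 * ε - 1)) := by
          rw [intervalIntegral.integral_const, smul_eq_mul]
          ring
  have hfinal : p * (6 * q ^ (2 * ε - 1)) ≤ 6 * p / q ^ (1 - ε) := by
    have h1 : q ^ (2 * ε - 1) = q ^ ε * q ^ (ε - 1) := by
      rw [← Real.rpow_add hq0]; ring_nf
    have h2 : q ^ ε ≤ 1 := Real.rpow_le_one hq0.le hq1 hε0.le
    have h3 : (0:ℝ) < q ^ (ε - 1) := Real.rpow_pos_of_pos hq0 _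
    have h4 : 6 * p / q ^ (1 - ε) = 6 * p * q ^ (ε - 1) := by
      rw [div_eq_mul_inv, ← Real.rpow_neg hq0.le, show -(1 - ε) = ε - 1 by ring]
    rw [h4, h1]
    have h5 : q ^ ε * q ^ (ε - 1) ≤ q ^ (ε - 1) := by nlinarith
    calc p * (6 * (q ^ ε * q ^ (ε - 1))) ≤ p * (6 * q ^ (ε - 1)) := by nlinarith
      _ = 6 * p * q ^ (ε - 1) := by ring
  linarith
end

section
/- If A₁ and A₂ are prevalent subsets of a completely metrizable topological vector space X, then A₁ ∩ A₂ is prevalent. -/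
open MeasureTheory Set Pointwise ENNReal

/-- A Borel set `A` in a topological vector space `X` is prevalent (as a Borel set) if
there are a Borel measure `μ` and a compact `K` with `0 < μ K < ∞` such that every
translate of `A` has full measure. -/
def IsPrevalentBorel {X : Type*} [AddCommGroup X] [TopologicalSpace X]
    [MeasurableSpace X] (A : Set X) : Prop :=
  MeasurableSet A ∧ ∃ (μ : Measure X) (K : Set X), IsCompact K ∧ 0 < μ K ∧ μ K < ⊤ ∧
    ∀ x : X, μ ((fun a => a + x) '' A)ᶜ = 0

/-- A set is prevalent if it contains a prevalent Borel set. -/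
def IsPrevalent {X : Type*} [AddCommGroup X] [TopologicalSpace X]
    [MeasurableSpace X] (A : Set X) : Prop :=
  ∃ B, B ⊆ A ∧ IsPrevalentBorel B

lemma add_sub_shift {X : Type*} [AddCommGroup X] (a b x y : X) :
    b + (x - y) = a ↔ b + x = a + y := by
  rw [← add_sub_assoc, sub_eq_iff_eq_add]

lemma preimage_add_image_add {X : Type*} [AddCommGroup X] (B : Set X) (x y : X) :
    (fun a => a + y) ⁻¹' ((fun a => a + x) '' B) = (fun a => a + (x - y)) '' B := by
  ext a
  simp only [Set.mem_preimage, Set.mem_image]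
  constructor
  · rintro ⟨b, hb, hbe⟩
    exact ⟨b, hb, (add_sub_shift a b x y).mpr hbe⟩
  · rintro ⟨b, hb, hbe⟩
    exact ⟨b, hb, (add_sub_shift a b x y).mp hbe⟩

/-- In a completely metrizable topological vector space, the intersection of two
prevalent sets is prevalent. -/
theorem stmt14 (X : Type*) [AddCommGroup X] [Module ℝ X] [TopologicalSpace X]
    [IsTopologicalAddGroup X] [ContinuousSMul ℝ X] [MeasurableSpace X] [BorelSpace X]
    (hmetr : ∃ m : MetricSpace X,
      m.toUniformSpace.toTopologicalSpace = ‹TopologicalSpace X› ∧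
        @CompleteSpace X m.toUniformSpace)
    (A₁ A₂ : Set X) (h₁ : IsPrevalent A₁) (h₂ : IsPrevalent A₂) :
    IsPrevalent (A₁ ∩ A₂) := by
  obtain ⟨B₁, hB₁A, hB₁m, μ₁, K₁, hK₁c, hK₁pos, hK₁fin, hμ₁⟩ := h₁
  obtain ⟨B₂, hB₂A, hB₂m, μ₂, K₂, hK₂c, hK₂pos, hK₂fin, hμ₂⟩ := h₂
  obtain ⟨m, hm, -⟩ := hmetr
  haveI : TopologicalSpace.MetrizableSpace X := by subst hm; infer_instance
  have hK₂meas : MeasurableSet K₂ := hK₂c.isClosed.measurableSet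
  haveI : CompactSpace ↥K₂ := isCompact_iff_compactSpace.mp hK₂c
  letI : MetricSpace ↥K₂ := TopologicalSpace.metrizableSpaceMetric ↥K₂
  haveI : SecondCountableTopology ↥K₂ := inferInstance
  have hemb : MeasurableEmbedding ((↑) : K₂ → X) := MeasurableEmbedding.subtype_coe hK₂meas
  set ρ₁ : Measure X := μ₁.restrict K₁ with hρ₁
  set ρ₂ : Measure ↥K₂ := μ₂.comap (↑) with hρ₂
  have hρ₂app : ∀ s : Set ↥K₂, MeasurableSet s → ρ₂ s = μ₂ (((↑) : K₂ → X) '' s) := by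
    intro s hs
    exact Measure.comap_apply _ Subtype.val_injective
      (fun t ht => hemb.measurableSet_image.mpr ht) _ hs
  haveI : IsFiniteMeasure ρ₁ := ⟨by rw [hρ₁, Measure.restrict_apply_univ]; exact hK₁fin⟩
  haveI : IsFiniteMeasure ρ₂ := by
    refine ⟨?_⟩
    rw [hρ₂app univ MeasurableSet.univ, Set.image_univ, Subtype.range_coe]
    exact hK₂fin
  have hfc : Continuous (fun p : X × ↥K₂ => p.1 + (p.2 : X)) :=
    continuous_fst.add (continuous_subtype_val.comp continuous_snd)
  have hf : Measurable (fun p : X × ↥K₂ => p.1 + (p.2 : X)) := hfc.measurable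
  set ν : Measure X := Measure.map (fun p : X × ↥K₂ => p.1 + (p.2 : X)) (ρ₁.prod ρ₂) with hν
  refine ⟨B₁ ∩ B₂, Set.inter_subset_inter hB₁A hB₂A, ⟨hB₁m.inter hB₂m, ν, K₁ + K₂,
    hK₁c.add hK₂c, ?_, ?_, ?_⟩⟩
  · -- positivity
    have hKm : MeasurableSet (K₁ + K₂) := (hK₁c.add hK₂c).isClosed.measurableSet
    rw [hν, Measure.map_apply hf hKm]
    have hsub : (K₁ ×ˢ (univ : Set ↥K₂)) ⊆
        (fun p : X × ↥K₂ => p.1 + (p.2 : X)) ⁻¹' (K₁ + K₂) := by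
      rintro ⟨a, y⟩ ⟨ha, -⟩
      exact Set.add_mem_add ha y.2
    calc (0 : ℝ≥0∞) < ρ₁ K₁ * ρ₂ univ := by
          apply ENNReal.mul_pos
          · rw [hρ₁, Measure.restrict_apply_self]; exact hK₁pos.ne'
          · rw [hρ₂app univ MeasurableSet.univ, Set.image_univ, Subtype.range_coe]
            exact hK₂pos.ne'
      _ = (ρ₁.prod ρ₂) (K₁ ×ˢ univ) := (Measure.prod_prod _ _).symm
      _ ≤ _ := measure_mono hsub
  · -- finiteness
    calc ν (K₁ + K₂) ≤ ν univ := measure_mono (subset_univ _)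
      _ = (ρ₁.prod ρ₂) univ := by rw [hν, Measure.map_apply hf MeasurableSet.univ,
            Set.preimage_univ]
      _ < ⊤ := measure_lt_top _ _
  · -- null translates
    intro x
    have hS₁ : MeasurableSet ((fun a => a + x) '' B₁) := by
      rw [show (fun a : X => a + x) = (· + x) from rfl, Set.image_add_right]
      exact (measurable_add_const (-x)) hB₁m
    have hS₂ : MeasurableSet ((fun a => a + x) '' B₂) := by
      rw [show (fun a : X => a + x) = (· + x) from rfl, Set.image_add_right]
      exact (measurable_add_const (-x)) hB₂m
    have hSeq : (fun a => a + x) '' (B₁ ∩ B₂) =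
        ((fun a => a + x) '' B₁) ∩ ((fun a => a + x) '' B₂) :=
      Set.image_inter (add_left_injective x)
    have h1 : ν ((fun a => a + x) '' B₁)ᶜ = 0 := by
      rw [hν, Measure.map_apply hf hS₁.compl]
      rw [Measure.prod_apply_symm (hf hS₁.compl)]
      have : ∀ y : ↥K₂, ρ₁ ((fun a => (a, y)) ⁻¹'
          ((fun p : X × ↥K₂ => p.1 + (p.2 : X)) ⁻¹' ((fun a => a + x) '' B₁)ᶜ)) = 0 := by
        intro y
        have hset : ((fun a => (a, y)) ⁻¹'
            ((fun p : X × ↥K₂ => p.1 + (p.2 : X)) ⁻¹' ((fun a => a + x) '' B₁)ᶜ))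
            = ((fun a => a + (x - (y : X))) '' B₁)ᶜ := by
          rw [← preimage_add_image_add B₁ x (y : X)]
          rfl
        rw [hset]
        exact le_antisymm (le_trans (Measure.restrict_le_self _)
          (le_of_eq (hμ₁ (x - (y : X))))) (zero_le)
      rw [lintegral_congr this, lintegral_zero]
    have h2 : ν ((fun a => a + x) '' B₂)ᶜ = 0 := by
      rw [hν, Measure.map_apply hf hS₂.compl]
      rw [Measure.prod_apply (hf hS₂.compl)]
      have : ∀ a : X, ρ₂ (Prod.mk a ⁻¹'
          ((fun p : X × ↥K₂ => p.1 + (p.2 : X)) ⁻¹' ((fun a => a + x) '' B₂)ᶜ)) = 0 := by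
        intro a
        have hmt : MeasurableSet (Prod.mk a ⁻¹'
            ((fun p : X × ↥K₂ => p.1 + (p.2 : X)) ⁻¹' ((fun a => a + x) '' B₂)ᶜ)) := by
          exact (hf hS₂.compl).preimage (measurable_prodMk_left)
        rw [hρ₂app _ hmt]
        refine le_antisymm (le_trans (measure_mono ?_) (le_of_eq (hμ₂ (x - a)))) (zero_le)
        rintro z ⟨y, hy, rfl⟩
        simp only [Set.mem_preimage, Set.mem_compl_iff] at hy ⊢
        intro hz
        apply hy
        obtain ⟨b, hb, hbe⟩ := hz
        exact ⟨b, hb, ((add_sub_shift (y : X) b x a).mp hbe).trans (add_comm _ _)⟩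
      rw [lintegral_congr this, lintegral_zero]
    rw [hSeq, Set.compl_inter]
    exact le_antisymm (le_trans (measure_union_le _ _) (by rw [h1, h2, add_zero])) (zero_le)
end
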